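/- Two-step reciprocity chain (n=1 even case, full): for positive integers u,v,z the three hook-content ratios coincide: P^{u+v+z-1}_{((v+z)^v, v^u)}(q) = P^{v+2z-1}_{((u+v)^v, v^z)}(q) = P^{2v+z-1}_{((u+z)^v, u^v)}(q). -/

import Mathlib

/-- The transpose (conjugate) partition: `λᵗ_j = #{i < N : λ_i > j}` (0-indexed),
for a partition `l` supported on indices `< N`. -/
def conj (l : ℕ → ℕ) (N : ℕ) : ℕ → ℕ := fun j => ((Finset.range N).filter fun i => j < l i).card

/-- The boxes `(i, j)` (0-indexed) of the Young diagram of `l` (with `l` antitone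
and supported on indices `< N`, so all columns are `< l 0`). -/
def boxes (l : ℕ → ℕ) (N : ℕ) : Finset (ℕ × ℕ) :=
  (Finset.range N ×ˢ Finset.range (l 0)).filter fun p => p.2 < l p.1

/-- The hook length of the (0-indexed) box `(i, j)`:
`(λ_i - 1 - j) + (λᵗ_j - 1 - i) + 1`. -/
def hook (l : ℕ → ℕ) (N i j : ℕ) : ℕ := (l i - 1 - j) + (conj l N j - 1 - i) + 1

/-- The `q`-analog `[a]_t = 1 + t + ⋯ + t^{a-1}`, evaluated at `t ∈ ℚ(q)`. -/
noncomputable def qv (t : RatFunc ℚ) (a : ℕ) : RatFunc ℚ := ∑ i ∈ Finset.range a, t ^ i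

/-- `|λ| = Σ λ_i`, the size of the partition. -/
def psize (l : ℕ → ℕ) (N : ℕ) : ℕ := ∑ i ∈ Finset.range N, l i

/-- `b(λ) = Σ_i (i-1)λ_i` (1-indexed), i.e. `Σ_i i·λ_i` with 0-indexing. -/
def bsum (l : ℕ → ℕ) (N : ℕ) : ℕ := ∑ i ∈ Finset.range N, i * l i

/-- The hook-content ratio `P^d_λ(t) = ∏_{u∈Y(λ)} [d+1+c(u)]_t / ∏_{u∈Y(λ)} [h(u)]_t`,
where `c(i,j) = j - i` is the content (so `d+1+c(u) = d+1+j-i` in `ℕ`), evaluated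
at `t ∈ ℚ(q)`. -/
noncomputable def Pt (l : ℕ → ℕ) (N d : ℕ) (t : RatFunc ℚ) : RatFunc ℚ :=
  (∏ p ∈ boxes l N, qv t (d + 1 + p.2 - p.1)) /
  (∏ p ∈ boxes l N, qv t (hook l N p.1 p.2))

/-- `P^d_λ(q)` as a rational function in `q`. -/
noncomputable def Pq (l : ℕ → ℕ) (N d : ℕ) : RatFunc ℚ := Pt l N d RatFunc.X

/-- The two-step staircase partition `(a^p, b^r)`: `p` parts equal to `a`
followed by `r` parts equal to `b` (with `a ≥ b`). -/
def twostep (a : ℕ) (p : ℕ) (b : ℕ) (r : ℕ) : ℕ → ℕ :=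
  fun i => if i < p then a else if i < p + r then b else 0

/-! ### Basic lemmas on `twostep` -/

lemma twostep_lt {a p b r i j : ℕ} (hba : b ≤ a) :
    j < twostep a p b r i ↔ (i < p ∧ j < a) ∨ (p ≤ i ∧ i < p + r ∧ j < b) := by
  unfold twostep; split_ifs <;> omega

lemma twostep_eq {a p b r i : ℕ} (hi : i < p + r) :
    twostep a p b r i = if i < p then a else b := by
  unfold twostep; split_ifs <;> omega

lemma mem_boxes {a p b r : ℕ} (hp : 0 < p) (hba : b ≤ a) {x : ℕ × ℕ} :
    x ∈ boxes (twostep a p b r) (p + r) ↔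
      (x.1 < p ∧ x.2 < a) ∨ (p ≤ x.1 ∧ x.1 < p + r ∧ x.2 < b) := by
  have h0 : twostep a p b r 0 = a := by unfold twostep; split_ifs <;> omega
  unfold boxes
  simp only [Finset.mem_filter, Finset.mem_product, Finset.mem_range, h0, twostep_lt hba]
  omega

lemma conj_twostep {a p b r : ℕ} (hba : b ≤ a) (j : ℕ) :
    conj (twostep a p b r) (p + r) j = if j < b then p + r else if j < a then p else 0 := by
  unfold conj
  split_ifs with h1 h2
  · rw [Finset.filter_true_of_mem, Finset.card_range]
    intro i hi
    rw [twostep_lt hba]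
    simp only [Finset.mem_range] at hi
    omega
  · have h : ((Finset.range (p + r)).filter fun i => j < twostep a p b r i) = Finset.range p := by
      ext i
      simp only [Finset.mem_filter, Finset.mem_range, twostep_lt hba]
      omega
    rw [h, Finset.card_range]
  · have h : ((Finset.range (p + r)).filter fun i => j < twostep a p b r i) = ∅ := by
      ext i
      simp only [Finset.mem_filter, Finset.mem_range, twostep_lt hba, Finset.notMem_empty,
        iff_false, not_and]
      omega
    rw [h, Finset.card_empty]

lemma hook_char {a p b r i j : ℕ} (hba : b ≤ a) (hi : i < p + r) (hj : j < twostep a p b r i) :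
    hook (twostep a p b r) (p + r) i j + (i + j + 1) =
      twostep a p b r i + (if j < b then p + r else if j < a then p else 0) := by
  have hj' := (twostep_lt hba).mp hj
  unfold hook
  rw [conj_twostep hba]
  unfold twostep
  split_ifs <;> omega

/-! ### Counting machinery -/

lemma count_eq (s : Finset (ℕ × ℕ)) (f : ℕ × ℕ → ℕ) (k : ℕ) :
    Multiset.count k (s.val.map f) = (s.filter fun x => f x = k).card := by
  rw [Multiset.count_map]
  rw [Multiset.filter_congr (fun x _ => eq_comm)]
  rfl

lemma card_proj {s : Finset (ℕ × ℕ)} {t : Finset ℕ} {g : ℕ → ℕ}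
    (h1 : ∀ x ∈ s, x.1 ∈ t ∧ x.2 = g x.1) (h2 : ∀ i ∈ t, (i, g i) ∈ s) :
    s.card = t.card := by
  apply Finset.card_bij' (fun x _ => x.1) (fun i _ => (i, g i))
    (fun x hx => (h1 x hx).1) (fun i hi => h2 i hi)
  · intro x hx
    have := (h1 x hx).2
    cases x
    simp_all
  · intro i hi
    rfl

/-- The parallelogram multiset `{X + i + j : i < p, j < L}`. -/
def para (X L p : ℕ) : Multiset ℕ :=
  (Finset.range p ×ˢ Finset.range L).val.map fun q => X + q.1 + q.2

/-- Opaque truncated counting function (kept opaque so `omega` treats it as an atom). -/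
def Fm (p X k : ℕ) : ℕ := min p (k + 1 - X)

lemma count_para (X L p k : ℕ) :
    Multiset.count k (para X L p) = Fm p X k - Fm p (X + L) k := by
  unfold para
  rw [count_eq]
  have hc : ((Finset.range p ×ˢ Finset.range L).filter fun q => X + q.1 + q.2 = k).card
      = (Finset.Ico (min p ((k + 1) - (X + L))) (min p ((k + 1) - X))).card := by
    apply card_proj (g := fun i => k - X - i)
    · intro x hx
      simp only [Finset.mem_filter, Finset.mem_product, Finset.mem_range] at hx
      simp only [Finset.mem_Ico]
      omega
    · intro i hi
      simp only [Finset.mem_Ico] at hi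
      simp only [Finset.mem_filter, Finset.mem_product, Finset.mem_range]
      omega
  rw [hc, Nat.card_Ico]
  unfold Fm
  omega

lemma para_swap (X L p : ℕ) : para X L p = para X p L := by
  ext k
  rw [count_para, count_para]
  unfold Fm
  omega

/-! ### Rectangle pieces as parallelograms -/

lemma rect_content (p0 p1 L D : ℕ) (hD : p1 ≤ D) :
    ((Finset.Ico p0 p1 ×ˢ Finset.Ico 0 L)).val.map (fun x => D + x.2 - x.1)
      = para (D + 1 - p1) L (p1 - p0) := by
  ext k
  rw [count_eq, count_para]
  have hc : ((Finset.Ico p0 p1 ×ˢ Finset.Ico 0 L).filter fun x => D + x.2 - x.1 = k).card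
      = (Finset.Ico (min p1 (max p0 (D - k))) (min p1 (max p0 ((D + L) - k)))).card := by
    apply card_proj (g := fun i => k + i - D)
    · intro x hx
      simp only [Finset.mem_filter, Finset.mem_product, Finset.mem_Ico] at hx
      simp only [Finset.mem_Ico]
      omega
    · intro i hi
      simp only [Finset.mem_Ico] at hi
      simp only [Finset.mem_filter, Finset.mem_product, Finset.mem_Ico]
      omega
  rw [hc, Nat.card_Ico]
  unfold Fm
  omega

lemma rect_antidiag (p0 p1 j0 j1 C : ℕ) (hC : p1 + j1 ≤ C + 2) :
    ((Finset.Ico p0 p1 ×ˢ Finset.Ico j0 j1)).val.map (fun x => C - x.1 - x.2)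
      = para (C + 2 - p1 - j1) (j1 - j0) (p1 - p0) := by
  ext k
  rw [count_eq, count_para]
  have hc : ((Finset.Ico p0 p1 ×ˢ Finset.Ico j0 j1).filter fun x => C - x.1 - x.2 = k).card
      = (Finset.Ico (min p1 (max p0 ((C + 1) - (k + j1))))
          (min p1 (max p0 ((C + 1) - (k + j0))))).card := by
    apply card_proj (g := fun i => C - k - i)
    · intro x hx
      simp only [Finset.mem_filter, Finset.mem_product, Finset.mem_Ico] at hx
      simp only [Finset.mem_Ico]
      omega
    · intro i hi
      simp only [Finset.mem_Ico] at hi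
      simp only [Finset.mem_filter, Finset.mem_product, Finset.mem_Ico]
      omega
  rw [hc, Nat.card_Ico]
  unfold Fm
  omega

/-! ### Decompositions of boxes -/

lemma boxes_decomp {a p b r : ℕ} (hp : 0 < p) (hba : b ≤ a)
    (hdisj : Disjoint (Finset.Ico 0 p ×ˢ Finset.Ico 0 a)
      (Finset.Ico p (p + r) ×ˢ Finset.Ico 0 b)) :
    boxes (twostep a p b r) (p + r)
      = (Finset.Ico 0 p ×ˢ Finset.Ico 0 a).disjUnion
          (Finset.Ico p (p + r) ×ˢ Finset.Ico 0 b) hdisj := by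
  ext x
  rw [mem_boxes hp hba]
  simp only [Finset.mem_disjUnion, Finset.mem_product, Finset.mem_Ico]
  omega

lemma boxes_disjoint1 {a p b r : ℕ} :
    Disjoint (Finset.Ico 0 p ×ˢ Finset.Ico 0 a) (Finset.Ico p (p + r) ×ˢ Finset.Ico 0 b) := by
  rw [Finset.disjoint_left]
  intro x hx1 hx2
  simp only [Finset.mem_product, Finset.mem_Ico] at hx1 hx2
  omega

lemma boxes_disjoint2 {a p b : ℕ} :
    Disjoint (Finset.Ico 0 p ×ˢ Finset.Ico 0 b) (Finset.Ico 0 p ×ˢ Finset.Ico b a) := by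
  rw [Finset.disjoint_left]
  intro x hx1 hx2
  simp only [Finset.mem_product, Finset.mem_Ico] at hx1 hx2
  omega

lemma boxes_disjoint3 {a p b r : ℕ} :
    Disjoint ((Finset.Ico 0 p ×ˢ Finset.Ico 0 b).disjUnion (Finset.Ico 0 p ×ˢ Finset.Ico b a)
      boxes_disjoint2) (Finset.Ico p (p + r) ×ˢ Finset.Ico 0 b) := by
  rw [Finset.disjoint_left]
  intro x hx1 hx2
  simp only [Finset.mem_disjUnion, Finset.mem_product, Finset.mem_Ico] at hx1 hx2
  omega

lemma boxes_decomp3 {a p b r : ℕ} (hp : 0 < p) (hb : 0 < b) (hba : b ≤ a) :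
    boxes (twostep a p b r) (p + r)
      = ((Finset.Ico 0 p ×ˢ Finset.Ico 0 b).disjUnion (Finset.Ico 0 p ×ˢ Finset.Ico b a)
          boxes_disjoint2).disjUnion (Finset.Ico p (p + r) ×ˢ Finset.Ico 0 b)
          boxes_disjoint3 := by
  ext x
  rw [mem_boxes hp hba]
  simp only [Finset.mem_disjUnion, Finset.mem_product, Finset.mem_Ico]
  omega

lemma disjUnion_val' {α : Type*} (s t : Finset α) (h : Disjoint s t) :
    (s.disjUnion t h).val = s.val + t.val := rfl

/-! ### The content multiset -/

lemma num_eq {a p b r d : ℕ} (hp : 0 < p) (hb : 0 < b) (hba : b ≤ a) (hd : p + r ≤ d + 1) :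
    (boxes (twostep a p b r) (p + r)).val.map (fun x => d + 1 + x.2 - x.1)
      = para (d + 2 - p) a p + para (d + 2 - p - r) b r := by
  rw [boxes_decomp hp hba boxes_disjoint1, disjUnion_val', Multiset.map_add,
    rect_content 0 p a (d + 1) (by omega), rect_content p (p + r) b (d + 1) (by omega)]
  rw [show d + 1 + 1 - p = d + 2 - p from by omega, show p - 0 = p from by omega,
    show d + 1 + 1 - (p + r) = d + 2 - p - r from by omega, show p + r - p = r from by omega]

/-! ### The hook multiset -/

lemma hook_TL {a p b r : ℕ} (hp : 0 < p) (hb : 0 < b) (hba : b ≤ a) :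
    (Finset.Ico 0 p ×ˢ Finset.Ico 0 b).val.map
        (fun x => hook (twostep a p b r) (p + r) x.1 x.2)
      = para (a + r + 1 - b) b p := by
  rw [Multiset.map_congr rfl (g := fun x => (a + p + r - 1) - x.1 - x.2) ?_]
  · rw [rect_antidiag 0 p 0 b (a + p + r - 1) (by omega)]
    rw [show a + p + r - 1 + 2 - p - b = a + r + 1 - b from by omega,
      show b - 0 = b from by omega, show p - 0 = p from by omega]
  · intro x hx
    rw [Finset.mem_val] at hx
    simp only [Finset.mem_product, Finset.mem_Ico] at hx
    have hi : x.1 < p + r := by omega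
    have hj : x.2 < twostep a p b r x.1 := by
      rw [twostep_eq hi, if_pos (show x.1 < p from by omega)]
      omega
    have hc := hook_char hba hi hj
    rw [twostep_eq hi, if_pos (show x.1 < p from by omega),
      if_pos (show x.2 < b from by omega)] at hc
    omega

lemma hook_TR {a p b r : ℕ} (hp : 0 < p) (hb : 0 < b) (hba : b ≤ a) :
    (Finset.Ico 0 p ×ˢ Finset.Ico b a).val.map
        (fun x => hook (twostep a p b r) (p + r) x.1 x.2)
      = para 1 (a - b) p := by
  rw [Multiset.map_congr rfl (g := fun x => (a + p - 1) - x.1 - x.2) ?_]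
  · rw [rect_antidiag 0 p b a (a + p - 1) (by omega)]
    rw [show a + p - 1 + 2 - p - a = 1 from by omega, show p - 0 = p from by omega]
  · intro x hx
    rw [Finset.mem_val] at hx
    simp only [Finset.mem_product, Finset.mem_Ico] at hx
    have hi : x.1 < p + r := by omega
    have hj : x.2 < twostep a p b r x.1 := by
      rw [twostep_eq hi, if_pos (show x.1 < p from by omega)]
      omega
    have hc := hook_char hba hi hj
    rw [twostep_eq hi, if_pos (show x.1 < p from by omega),
      if_neg (show ¬ x.2 < b from by omega), if_pos (show x.2 < a from by omega)] at hc
    omega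

lemma hook_BR {a p b r : ℕ} (hp : 0 < p) (hb : 0 < b) (hba : b ≤ a) :
    (Finset.Ico p (p + r) ×ˢ Finset.Ico 0 b).val.map
        (fun x => hook (twostep a p b r) (p + r) x.1 x.2)
      = para 1 b r := by
  rw [Multiset.map_congr rfl (g := fun x => (b + p + r - 1) - x.1 - x.2) ?_]
  · rw [rect_antidiag p (p + r) 0 b (b + p + r - 1) (by omega)]
    rw [show b + p + r - 1 + 2 - (p + r) - b = 1 from by omega,
      show b - 0 = b from by omega, show p + r - p = r from by omega]
  · intro x hx
    rw [Finset.mem_val] at hx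
    simp only [Finset.mem_product, Finset.mem_Ico] at hx
    have hi : x.1 < p + r := by omega
    have hj : x.2 < twostep a p b r x.1 := by
      rw [twostep_eq hi, if_neg (show ¬ x.1 < p from by omega)]
      omega
    have hc := hook_char hba hi hj
    rw [twostep_eq hi, if_neg (show ¬ x.1 < p from by omega),
      if_pos (show x.2 < b from by omega)] at hc
    omega

lemma hook_eq {a p b r : ℕ} (hp : 0 < p) (hb : 0 < b) (hba : b ≤ a) :
    (boxes (twostep a p b r) (p + r)).val.map
        (fun x => hook (twostep a p b r) (p + r) x.1 x.2)
      = para (a + r + 1 - b) b p + para 1 (a - b) p + para 1 b r := by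
  rw [boxes_decomp3 hp hb hba, disjUnion_val', disjUnion_val',
    Multiset.map_add, Multiset.map_add, hook_TL hp hb hba, hook_TR hp hb hba,
    hook_BR hp hb hba]

/-! ### Products of `qv` over multisets -/

lemma prod_map_eq {s t : Finset (ℕ × ℕ)} {f g : ℕ × ℕ → ℕ} (F : ℕ → RatFunc ℚ)
    (h : s.val.map f = t.val.map g) : s.prod (F ∘ f) = t.prod (F ∘ g) := by
  rw [Finset.prod_eq_multiset_prod, Finset.prod_eq_multiset_prod,
    ← Multiset.map_map, ← Multiset.map_map, h]

lemma prod_map_mul_eq {s t s' t' : Finset (ℕ × ℕ)} {f g f' g' : ℕ × ℕ → ℕ}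
    (F : ℕ → RatFunc ℚ)
    (h : s.val.map f + t.val.map g = s'.val.map f' + t'.val.map g') :
    s.prod (F ∘ f) * t.prod (F ∘ g) = s'.prod (F ∘ f') * t'.prod (F ∘ g') := by
  have h2 := congrArg (fun m : Multiset ℕ => (m.map F).prod) h
  simpa only [Multiset.map_add, Multiset.prod_add, Multiset.map_map,
    Finset.prod_eq_multiset_prod] using h2

lemma qv_X_ne_zero {n : ℕ} (hn : 0 < n) : qv RatFunc.X n ≠ 0 := by
  unfold qv
  have hmap : (∑ i ∈ Finset.range n, (RatFunc.X : RatFunc ℚ) ^ i) =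
      algebraMap (Polynomial ℚ) (RatFunc ℚ) (∑ i ∈ Finset.range n, Polynomial.X ^ i) := by
    rw [map_sum]
    simp [map_pow, RatFunc.algebraMap_X]
  rw [hmap]
  intro h
  have h0 : (∑ i ∈ Finset.range n, (Polynomial.X : Polynomial ℚ) ^ i) = 0 :=
    RatFunc.algebraMap_injective ℚ (by simpa using h)
  have h1 := congrArg (Polynomial.eval 1) h0
  simp [Polynomial.eval_finset_sum] at h1
  omega

lemma den_ne_zero (l : ℕ → ℕ) (N : ℕ) :
    (∏ p ∈ boxes l N, qv RatFunc.X (hook l N p.1 p.2)) ≠ 0 := by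
  rw [Finset.prod_ne_zero_iff]
  intro x _
  apply qv_X_ne_zero
  unfold hook
  omega

/-- Two-step reciprocity chain (n = 1, even case, full): for positive integers
`u, v, z`, `P^{u+v+z-1}_{((v+z)^v, v^u)}(q) = P^{v+2z-1}_{((u+v)^v, v^z)}(q)
= P^{2v+z-1}_{((u+z)^v, u^v)}(q)`. -/
theorem twostep_reciprocity_chain (u v z : ℕ) (hu : 0 < u) (hv : 0 < v) (hz : 0 < z) :
    Pq (twostep (v + z) v v u) (v + u) (u + v + z - 1) =
      Pq (twostep (u + v) v v z) (v + z) (v + 2 * z - 1) ∧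
    Pq (twostep (u + v) v v z) (v + z) (v + 2 * z - 1) =
      Pq (twostep (u + z) v u v) (2 * v) (2 * v + z - 1) := by
  rw [two_mul v]
  -- content multisets as parallelograms
  have numA : (boxes (twostep (v + z) v v u) (v + u)).val.map
        (fun x => (u + v + z - 1) + 1 + x.2 - x.1)
      = para (u + z + 1) (v + z) v + para (z + 1) u v := by
    rw [num_eq hv hv (by omega) (by omega)]
    rw [show u + v + z - 1 + 2 - v = u + z + 1 from by omega,
      show u + z + 1 - u = z + 1 from by omega, para_swap (z + 1) v u]
  have numB : (boxes (twostep (u + v) v v z) (v + z)).val.map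
        (fun x => (v + 2 * z - 1) + 1 + x.2 - x.1)
      = para (2 * z + 1) (u + v) v + para (z + 1) z v := by
    rw [num_eq hv hv (by omega) (by omega)]
    rw [show v + 2 * z - 1 + 2 - v = 2 * z + 1 from by omega,
      show 2 * z + 1 - z = z + 1 from by omega, para_swap (z + 1) v z]
  have numC : (boxes (twostep (u + z) v u v) (v + v)).val.map
        (fun x => (v + v + z - 1) + 1 + x.2 - x.1)
      = para (v + z + 1) (u + z) v + para (z + 1) u v := by
    rw [num_eq hv hu (by omega) (by omega)]
    rw [show v + v + z - 1 + 2 - v = v + z + 1 from by omega,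
      show v + z + 1 - v = z + 1 from by omega]
  -- hook multisets as parallelograms
  have hookA : (boxes (twostep (v + z) v v u) (v + u)).val.map
        (fun x => hook (twostep (v + z) v v u) (v + u) x.1 x.2)
      = para (u + z + 1) v v + para 1 z v + para 1 u v := by
    rw [hook_eq hv hv (by omega)]
    rw [show v + z + u + 1 - v = u + z + 1 from by omega,
      show v + z - v = z from by omega, para_swap 1 v u]
  have hookB : (boxes (twostep (u + v) v v z) (v + z)).val.map
        (fun x => hook (twostep (u + v) v v z) (v + z) x.1 x.2)
      = para (u + z + 1) v v + para 1 u v + para 1 z v := by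
    rw [hook_eq hv hv (by omega)]
    rw [show u + v + z + 1 - v = u + z + 1 from by omega,
      show u + v - v = u from by omega, para_swap 1 v z]
  have hookC : (boxes (twostep (u + z) v u v) (v + v)).val.map
        (fun x => hook (twostep (u + z) v u v) (v + v) x.1 x.2)
      = para (v + z + 1) u v + para 1 z v + para 1 u v := by
    rw [hook_eq hv hu (by omega)]
    rw [show u + z + v + 1 - u = v + z + 1 from by omega,
      show u + z - u = z from by omega]
  -- the three multiset identities
  have M1 : (boxes (twostep (v + z) v v u) (v + u)).val.map
        (fun x => (u + v + z - 1) + 1 + x.2 - x.1)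
      = (boxes (twostep (u + v) v v z) (v + z)).val.map
        (fun x => (v + 2 * z - 1) + 1 + x.2 - x.1) := by
    rw [numA, numB]
    ext k
    simp only [Multiset.count_add, count_para]
    rw [show u + z + 1 + (v + z) = 2 * z + 1 + (u + v) from by ring,
      show z + 1 + u = u + z + 1 from by ring, show z + 1 + z = 2 * z + 1 from by ring]
    have m1 : Fm v (2 * z + 1 + (u + v)) k ≤ Fm v (u + z + 1) k := by unfold Fm; omega
    have m2 : Fm v (u + z + 1) k ≤ Fm v (z + 1) k := by unfold Fm; omega
    have m3 : Fm v (2 * z + 1 + (u + v)) k ≤ Fm v (2 * z + 1) k := by unfold Fm; omega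
    have m4 : Fm v (2 * z + 1) k ≤ Fm v (z + 1) k := by unfold Fm; omega
    omega
  have M2 : (boxes (twostep (v + z) v v u) (v + u)).val.map
        (fun x => hook (twostep (v + z) v v u) (v + u) x.1 x.2)
      = (boxes (twostep (u + v) v v z) (v + z)).val.map
        (fun x => hook (twostep (u + v) v v z) (v + z) x.1 x.2) := by
    rw [hookA, hookB]
    ext k
    simp only [Multiset.count_add, count_para]
    rw [show (1 : ℕ) + z = z + 1 from by ring, show (1 : ℕ) + u = u + 1 from by ring]
    omega
  have M3 : (boxes (twostep (u + v) v v z) (v + z)).val.map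
          (fun x => (v + 2 * z - 1) + 1 + x.2 - x.1)
        + (boxes (twostep (u + z) v u v) (v + v)).val.map
          (fun x => hook (twostep (u + z) v u v) (v + v) x.1 x.2)
      = (boxes (twostep (u + z) v u v) (v + v)).val.map
          (fun x => (v + v + z - 1) + 1 + x.2 - x.1)
        + (boxes (twostep (u + v) v v z) (v + z)).val.map
          (fun x => hook (twostep (u + v) v v z) (v + z) x.1 x.2) := by
    rw [numB, numC, hookB, hookC]
    ext k
    simp only [Multiset.count_add, count_para]
    rw [show 2 * z + 1 + (u + v) = u + v + 2 * z + 1 from by ring,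
      show z + 1 + z = 2 * z + 1 from by ring,
      show v + z + 1 + u = u + v + z + 1 from by ring,
      show (1 : ℕ) + z = z + 1 from by ring,
      show (1 : ℕ) + u = u + 1 from by ring,
      show v + z + 1 + (u + z) = u + v + 2 * z + 1 from by ring,
      show z + 1 + u = u + z + 1 from by ring,
      show u + z + 1 + v = u + v + z + 1 from by ring]
    have m1 : Fm v (u + v + 2 * z + 1) k ≤ Fm v (2 * z + 1) k := by unfold Fm; omega
    have m2 : Fm v (2 * z + 1) k ≤ Fm v (z + 1) k := by unfold Fm; omega
    have m3 : Fm v (u + v + z + 1) k ≤ Fm v (v + z + 1) k := by unfold Fm; omega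
    have m4 : Fm v (z + 1) k ≤ Fm v 1 k := by unfold Fm; omega
    have m5 : Fm v (u + 1) k ≤ Fm v 1 k := by unfold Fm; omega
    have m6 : Fm v (u + v + 2 * z + 1) k ≤ Fm v (v + z + 1) k := by unfold Fm; omega
    have m7 : Fm v (u + z + 1) k ≤ Fm v (z + 1) k := by unfold Fm; omega
    have m8 : Fm v (u + v + z + 1) k ≤ Fm v (u + z + 1) k := by unfold Fm; omega
    omega
  constructor
  · unfold Pq Pt
    have e1 : (∏ p ∈ boxes (twostep (v + z) v v u) (v + u),
          qv RatFunc.X ((u + v + z - 1) + 1 + p.2 - p.1))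
        = ∏ p ∈ boxes (twostep (u + v) v v z) (v + z),
          qv RatFunc.X ((v + 2 * z - 1) + 1 + p.2 - p.1) :=
      prod_map_eq (qv RatFunc.X) M1
    have e2 : (∏ p ∈ boxes (twostep (v + z) v v u) (v + u),
          qv RatFunc.X (hook (twostep (v + z) v v u) (v + u) p.1 p.2))
        = ∏ p ∈ boxes (twostep (u + v) v v z) (v + z),
          qv RatFunc.X (hook (twostep (u + v) v v z) (v + z) p.1 p.2) :=
      prod_map_eq (qv RatFunc.X) M2
    rw [e1, e2]
  · unfold Pq Pt
    rw [div_eq_div_iff (den_ne_zero _ _) (den_ne_zero _ _)]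
    exact prod_map_mul_eq (qv RatFunc.X) M3
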